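/- The permutation representative with top row 0,...,10 and bottom row 2,10,7,5,8,1,9,6,4,3,0 gives, with h = (1,...,10) and v the inverse of the permutation obtained by deleting 0s, a single 10-cycle v and a commutator [h,v] that is a product of two disjoint 5-cycles (hence a 1,1-square-tiled surface in the stratum H(4,4)). -/

import Mathlib

set_option maxRecDepth 10000 in
/-- The representative with top row `0,…,10` and bottom row
`2,10,7,5,8,1,9,6,4,3,0` gives a 1,1-square-tiled surface in `H(4,4)`: with
`h = (1,2,…,10)` and `v = π⁻¹` where `π` is the permutation obtained by deleting
the `0`s (`1↦2, 2↦10, 3↦7, 4↦5, 5↦8, 6↦1, 7↦9, 8↦6, 9↦4, 10↦3`), `π` is a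
single 10-cycle and the commutator `[h,v]` is a product of two disjoint
5-cycles. -/
theorem stmt_15 (π h : Equiv.Perm (Fin 11))
    (hπ1 : π 1 = 2) (hπ2 : π 2 = 10) (hπ3 : π 3 = 7) (hπ4 : π 4 = 5)
    (hπ5 : π 5 = 8) (hπ6 : π 6 = 1) (hπ7 : π 7 = 9) (hπ8 : π 8 = 6)
    (hπ9 : π 9 = 4) (hπ10 : π 10 = 3)
    (hh1 : h 1 = 2) (hh2 : h 2 = 3) (hh3 : h 3 = 4) (hh4 : h 4 = 5)
    (hh5 : h 5 = 6) (hh6 : h 6 = 7) (hh7 : h 7 = 8) (hh8 : h 8 = 9)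
    (hh9 : h 9 = 10) (hh10 : h 10 = 1) :
    π.IsCycle ∧ π.support.card = 10 ∧
      (h * π⁻¹ * h⁻¹ * π).cycleType = {5, 5} := by
  have key : ∀ y : Fin 11, ¬(y = 1 ∨ y = 2 ∨ y = 3 ∨ y = 4 ∨ y = 5 ∨
      y = 6 ∨ y = 7 ∨ y = 8 ∨ y = 9 ∨ y = 10) → y = 0 := by decide
  have injπ := π.injective
  have injh := h.injective
  have hπ0 : π 0 = 0 := by
    apply key
    rintro (e|e|e|e|e|e|e|e|e|e)
    · exact absurd (injπ (e.trans hπ6.symm)) (by decide)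
    · exact absurd (injπ (e.trans hπ1.symm)) (by decide)
    · exact absurd (injπ (e.trans hπ10.symm)) (by decide)
    · exact absurd (injπ (e.trans hπ9.symm)) (by decide)
    · exact absurd (injπ (e.trans hπ4.symm)) (by decide)
    · exact absurd (injπ (e.trans hπ8.symm)) (by decide)
    · exact absurd (injπ (e.trans hπ3.symm)) (by decide)
    · exact absurd (injπ (e.trans hπ5.symm)) (by decide)
    · exact absurd (injπ (e.trans hπ7.symm)) (by decide)
    · exact absurd (injπ (e.trans hπ2.symm)) (by decide)
  have hh0 : h 0 = 0 := by
    apply key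
    rintro (e|e|e|e|e|e|e|e|e|e)
    · exact absurd (injh (e.trans hh10.symm)) (by decide)
    · exact absurd (injh (e.trans hh1.symm)) (by decide)
    · exact absurd (injh (e.trans hh2.symm)) (by decide)
    · exact absurd (injh (e.trans hh3.symm)) (by decide)
    · exact absurd (injh (e.trans hh4.symm)) (by decide)
    · exact absurd (injh (e.trans hh5.symm)) (by decide)
    · exact absurd (injh (e.trans hh6.symm)) (by decide)
    · exact absurd (injh (e.trans hh7.symm)) (by decide)
    · exact absurd (injh (e.trans hh8.symm)) (by decide)
    · exact absurd (injh (e.trans hh9.symm)) (by decide)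
  have hπeq : π = List.formPerm
      ([1,2,10,3,7,9,4,5,8,6] : List (Fin 11)) := by
    apply Equiv.ext
    intro x
    fin_cases x
    · exact hπ0.trans (by decide)
    · exact hπ1.trans (by decide)
    · exact hπ2.trans (by decide)
    · exact hπ3.trans (by decide)
    · exact hπ4.trans (by decide)
    · exact hπ5.trans (by decide)
    · exact hπ6.trans (by decide)
    · exact hπ7.trans (by decide)
    · exact hπ8.trans (by decide)
    · exact hπ9.trans (by decide)
    · exact hπ10.trans (by decide)
  have hheq : h = List.formPerm
      ([1,2,3,4,5,6,7,8,9,10] : List (Fin 11)) := by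
    apply Equiv.ext
    intro x
    fin_cases x
    · exact hh0.trans (by decide)
    · exact hh1.trans (by decide)
    · exact hh2.trans (by decide)
    · exact hh3.trans (by decide)
    · exact hh4.trans (by decide)
    · exact hh5.trans (by decide)
    · exact hh6.trans (by decide)
    · exact hh7.trans (by decide)
    · exact hh8.trans (by decide)
    · exact hh9.trans (by decide)
    · exact hh10.trans (by decide)
  subst hπeq hheq
  refine ⟨List.isCycle_formPerm (by decide) (by decide), by decide, ?_⟩
  have hcomm : List.formPerm ([1,2,3,4,5,6,7,8,9,10] : List (Fin 11)) *
      (List.formPerm ([1,2,10,3,7,9,4,5,8,6] : List (Fin 11)))⁻¹ *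
      (List.formPerm ([1,2,3,4,5,6,7,8,9,10] : List (Fin 11)))⁻¹ *
      List.formPerm ([1,2,10,3,7,9,4,5,8,6] : List (Fin 11)) =
      List.formPerm ([1,7,6,3,9] : List (Fin 11)) *
      List.formPerm ([2,8,5,4,10] : List (Fin 11)) := by decide
  rw [hcomm]
  have hd1 : (List.formPerm ([1,7,6,3,9] : List (Fin 11))).IsCycle :=
    List.isCycle_formPerm (by decide) (by decide)
  have hd2 : (List.formPerm ([2,8,5,4,10] : List (Fin 11))).IsCycle :=
    List.isCycle_formPerm (by decide) (by decide)
  have hdisj : Equiv.Perm.Disjoint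
      (List.formPerm ([1,7,6,3,9] : List (Fin 11)))
      (List.formPerm ([2,8,5,4,10] : List (Fin 11))) := by
    rw [Equiv.Perm.disjoint_iff_eq_or_eq]; decide
  rw [Equiv.Perm.Disjoint.cycleType_mul hdisj, hd1.cycleType, hd2.cycleType,
    show (List.formPerm ([1,7,6,3,9] : List (Fin 11))).support.card = 5 from by decide,
    show (List.formPerm ([2,8,5,4,10] : List (Fin 11))).support.card = 5 from by decide]
  rfl
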